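/- A word u # v^inv (u, v ∈ {x,x̄}*) lies in WP(FIM_1) if and only if the path traced by the concatenated word u v^inv (reading u then v^inv, starting at 0) ends at 0, and its maximum value and its minimum value are each attained at least once within the prefix u (including at its end) and at least once within the suffix v^inv (including at its start). -/

import Mathlib

/-- Step of a letter: `true` = x (+1), `false` = x̄ (-1). -/
def step (b : Bool) : ℤ := if b then 1 else -1

/-- μ(w): endpoint of the path traced by `w` starting at 0. -/
def mu (w : List Bool) : ℤ := (w.map step).sum

/-- ν(w): maximum position visited (max of μ over prefixes). -/
def nu (w : List Bool) : ℤ := (w.inits.map mu).foldr max 0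

/-- λ(w): negative of the minimum position visited. -/
def lam (w : List Bool) : ℤ := -((w.inits.map mu).foldr min 0)

/-- The formal inverse word: reverse and swap x ↔ x̄. -/
def winv (w : List Bool) : List Bool := w.reverse.map (fun b => !b)

lemma mu_nil : mu [] = 0 := rfl

lemma mu_append (a b : List Bool) : mu (a ++ b) = mu a + mu b := by
  simp [mu]

lemma mu_map_not (w : List Bool) : mu (w.map (fun b => !b)) = -mu w := by
  induction w with
  | nil => rfl
  | cons a t ih =>
    simp only [List.map_cons, mu, List.sum_cons] at *
    cases a <;> simp [step] at * <;> omega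

lemma mu_reverse (w : List Bool) : mu w.reverse = mu w := by
  rw [mu, List.map_reverse, List.sum_reverse]; rfl

lemma mu_winv (w : List Bool) : mu (winv w) = -mu w := by
  rw [winv, mu_map_not, mu_reverse]

lemma winv_append (a b : List Bool) : winv (a ++ b) = winv b ++ winv a := by
  simp [winv]

lemma le_foldr_max {l : List ℤ} {a : ℤ} (h : a ∈ l) : a ≤ l.foldr max 0 := by
  induction l with
  | nil => cases h
  | cons x t ih =>
    rcases List.mem_cons.mp h with h | h
    · subst h; exact le_max_left _ _
    · exact le_trans (ih h) (le_max_right _ _)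

lemma foldr_max_mem (l : List ℤ) : l.foldr max 0 = 0 ∨ l.foldr max 0 ∈ l := by
  induction l with
  | nil => left; rfl
  | cons x t ih =>
    rcases max_choice x (t.foldr max 0) with h | h
    · right; simp [List.foldr_cons, h]
    · rcases ih with h' | h'
      · left; rw [List.foldr_cons, h]; exact h'
      · right; simp only [List.foldr_cons, h]; exact List.mem_cons_of_mem _ h'

lemma mu_prefix_le_nu {p w : List Bool} (h : p <+: w) : mu p ≤ nu w :=
  le_foldr_max (List.mem_map_of_mem (f := mu) ((List.mem_inits _ _).mpr h))

lemma nu_attained (w : List Bool) : ∃ p, p <+: w ∧ mu p = nu w := by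
  rcases foldr_max_mem (w.inits.map mu) with h | h
  · exact ⟨[], List.nil_prefix, by rw [nu, h]; rfl⟩
  · obtain ⟨p, hp, hmp⟩ := List.mem_map.mp h
    exact ⟨p, (List.mem_inits _ _).mp hp, hmp⟩

lemma prefix_append_cases {p u w : List Bool} (h : p <+: u ++ w) :
    p <+: u ∨ ∃ q, q <+: w ∧ p = u ++ q := by
  by_cases hl : p.length ≤ u.length
  · left; exact List.prefix_of_prefix_length_le h (u.prefix_append w) hl
  · right
    have hu : u <+: p :=
      List.prefix_of_prefix_length_le (u.prefix_append w) h (le_of_not_ge hl)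
    obtain ⟨q, rfl⟩ := hu
    refine ⟨q, ?_, rfl⟩
    obtain ⟨r, hr⟩ := h
    rw [List.append_assoc] at hr
    exact ⟨r, List.append_cancel_left hr⟩

lemma map_not_involutive (l : List Bool) :
    (l.map (fun b => !b)).map (fun b => !b) = l := by
  simp only [List.map_map, Function.comp_def, Bool.not_not, List.map_id']

lemma prefix_winv_iff {p v : List Bool} : p <+: winv v ↔ ∃ s, s <:+ v ∧ p = winv s := by
  constructor
  · intro h
    rw [winv, List.map_reverse] at h
    have h2 : p.reverse <:+ v.map (fun b => !b) := by
      rw [← List.reverse_prefix, List.reverse_reverse]; exact h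
    obtain ⟨t, ht⟩ := h2
    refine ⟨p.reverse.map (fun b => !b), ?_, ?_⟩
    · refine ⟨t.map (fun b => !b), ?_⟩
      have h3 := congrArg (List.map (fun b => !b)) ht
      rw [List.map_append, map_not_involutive] at h3
      exact h3
    · rw [winv, ← List.map_reverse, List.reverse_reverse, map_not_involutive]
  · rintro ⟨s, ⟨t, rfl⟩, rfl⟩
    rw [winv_append]; exact List.prefix_append _ _

lemma core (u v : List Bool) (h : mu u = mu v) :
    nu u = nu v ↔
      ((∃ p, p <+: u ∧ mu p = nu (u ++ winv v)) ∧
       (∃ p, p <+: winv v ∧ mu (u ++ p) = nu (u ++ winv v))) := by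
  set M := nu (u ++ winv v) with hM
  have key1 : ∀ t, t <+: v → mu t ≤ M := by
    rintro t ⟨s, rfl⟩
    have hp : u ++ winv s <+: u ++ winv (t ++ s) := by
      rw [winv_append, ← List.append_assoc]; exact List.prefix_append _ _
    have h1 := mu_prefix_le_nu hp
    rw [mu_append, mu_winv] at h1
    have h2 := mu_append t s
    omega
  have key2 : ∀ q, q <+: winv v → ∃ t, t <+: v ∧ mu u + mu q = mu t := by
    intro q hq
    obtain ⟨s, ⟨t, rfl⟩, rfl⟩ := prefix_winv_iff.mp hq
    refine ⟨t, ⟨s, rfl⟩, ?_⟩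
    have h1 := mu_append t s
    rw [mu_winv]
    omega
  have hMu : nu u ≤ M := by
    obtain ⟨p, hp, hmp⟩ := nu_attained u
    rw [← hmp]; exact mu_prefix_le_nu (hp.trans (u.prefix_append (winv v)))
  have hMv : nu v ≤ M := by
    obtain ⟨t, ht, hmt⟩ := nu_attained v
    rw [← hmt]; exact key1 t ht
  have hMle : M ≤ max (nu u) (nu v) := by
    obtain ⟨p, hp, hmp⟩ := nu_attained (u ++ winv v)
    rcases prefix_append_cases hp with h' | ⟨q, hq, rfl⟩
    · have := mu_prefix_le_nu h'; omega
    · obtain ⟨t, ht, he⟩ := key2 q hq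
      have h1 := mu_prefix_le_nu ht
      have h2 := mu_append u q
      omega
  constructor
  · intro hnv
    have hMeq : M = nu u := by omega
    constructor
    · obtain ⟨p, hp, hmp⟩ := nu_attained u
      exact ⟨p, hp, by omega⟩
    · obtain ⟨t, ht, hmt⟩ := nu_attained v
      obtain ⟨s, rfl⟩ := ht
      refine ⟨winv s, by rw [winv_append]; exact List.prefix_append _ _, ?_⟩
      rw [mu_append, mu_winv]
      have := mu_append t s
      omega
  · rintro ⟨⟨p, hp, hmp⟩, ⟨q, hq, hmq⟩⟩
    have h1 : M ≤ nu u := hmp ▸ mu_prefix_le_nu hp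
    obtain ⟨t, ht, he⟩ := key2 q hq
    have h2 := mu_prefix_le_nu ht
    have h3 := mu_append u q
    omega

lemma inits_map' (f : Bool → Bool) (l : List Bool) :
    (l.map f).inits = l.inits.map (List.map f) := by
  induction l with
  | nil => rfl
  | cons a t ih =>
    have hf : ((fun l => f a :: l) ∘ List.map f) = (List.map f ∘ fun l => a :: l) := by
      funext p; simp
    simp only [List.map_cons, List.inits_cons, ih, List.map_map, List.map_nil, hf]

lemma foldr_max_neg (l : List ℤ) :
    (l.map (fun x => -x)).foldr max 0 = -(l.foldr min 0) := by
  induction l with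
  | nil => rfl
  | cons x t ih => simp only [List.map_cons, List.foldr_cons, ih]; omega

lemma lam_eq_nu (w : List Bool) : lam w = nu (w.map (fun b => !b)) := by
  rw [lam, nu, inits_map', List.map_map]
  have : (mu ∘ List.map fun b => !b) = (fun x => -x) ∘ mu := by
    funext p; simp [Function.comp, mu_map_not]
  rw [this, ← List.map_map, foldr_max_neg]

lemma map_not_winv (v : List Bool) :
    (winv v).map (fun b => !b) = winv (v.map (fun b => !b)) := by
  simp [winv, List.map_map, Function.comp]

/-- u # v^inv ∈ WP(FIM₁) iff the path of u·v^inv ends at 0 and its maximum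
and minimum are each attained at least once within u (including its end) and
at least once within v^inv (including its start). -/
theorem stmt14 (u v : List Bool) :
    (lam u = lam v ∧ nu u = nu v ∧ mu u = mu v) ↔
    (mu (u ++ winv v) = 0 ∧
     (∃ p, p <+: u ∧ mu p = nu (u ++ winv v)) ∧
     (∃ p, p <+: winv v ∧ mu (u ++ p) = nu (u ++ winv v)) ∧
     (∃ p, p <+: u ∧ mu p = -lam (u ++ winv v)) ∧
     (∃ p, p <+: winv v ∧ mu (u ++ p) = -lam (u ++ winv v))) := by
  set u' := u.map (fun b => !b) with hu'
  set v' := v.map (fun b => !b) with hv'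
  have hmuv : mu (u ++ winv v) = mu u - mu v := by rw [mu_append, mu_winv]; ring
  have hlamN : lam (u ++ winv v) = nu (u' ++ winv v') := by
    rw [lam_eq_nu, List.map_append, map_not_winv]
  -- translation of the λ-conditions
  have trans4 : (∃ p, p <+: u ∧ mu p = -lam (u ++ winv v)) ↔
      (∃ p, p <+: u' ∧ mu p = nu (u' ++ winv v')) := by
    rw [hlamN]
    constructor
    · rintro ⟨p, hp, hmp⟩
      refine ⟨p.map (fun b => !b), hp.map _, ?_⟩
      rw [mu_map_not]; omega
    · rintro ⟨p, hp, hmp⟩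
      refine ⟨p.map (fun b => !b), ?_, ?_⟩
      · have := hp.map (fun b => !b)
        rw [hu', map_not_involutive] at this
        exact this
      · rw [mu_map_not]; omega
  have trans5 : (∃ p, p <+: winv v ∧ mu (u ++ p) = -lam (u ++ winv v)) ↔
      (∃ p, p <+: winv v' ∧ mu (u' ++ p) = nu (u' ++ winv v')) := by
    rw [hlamN]
    have hmuu' : mu u' = -mu u := by rw [hu']; exact mu_map_not u
    constructor
    · rintro ⟨p, hp, hmp⟩
      refine ⟨p.map (fun b => !b), ?_, ?_⟩
      · rw [← map_not_winv]; exact hp.map _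
      · rw [mu_append, hu', mu_map_not, mu_map_not]
        rw [mu_append] at hmp
        rw [← hu']
        omega
    · rintro ⟨p, hp, hmp⟩
      refine ⟨p.map (fun b => !b), ?_, ?_⟩
      · have := hp.map (fun b => !b)
        rw [map_not_winv, hv', map_not_involutive] at this
        exact this
      · rw [mu_append, mu_map_not]
        rw [mu_append, hu', mu_map_not, ← hu'] at hmp
        omega
  constructor
  · rintro ⟨hl, hn, hm⟩
    have hm' : mu u' = mu v' := by rw [hu', hv', mu_map_not, mu_map_not]; omega
    have hn' : nu u' = nu v' := by
      rw [← lam_eq_nu, ← lam_eq_nu]; exact hl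
    obtain ⟨A, B⟩ := (core u v hm).mp hn
    obtain ⟨C, D⟩ := (core u' v' hm').mp hn'
    exact ⟨by omega, A, B, trans4.mpr C, trans5.mpr D⟩
  · rintro ⟨h0, A, B, C, D⟩
    have hm : mu u = mu v := by omega
    have hm' : mu u' = mu v' := by rw [hu', hv', mu_map_not, mu_map_not]; omega
    refine ⟨?_, (core u v hm).mpr ⟨A, B⟩, hm⟩
    have := (core u' v' hm').mpr ⟨trans4.mp C, trans5.mp D⟩
    rw [lam_eq_nu, lam_eq_nu]; exact this
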